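/- Hennessy–Milner property for simulations: let I and J be interpretations with J finite (or, more generally, finitely branching), and fix a signature Σ. Define the relation S ⊆ Δ^I × Δ^J by (d,e) ∈ S iff for every EL concept C over Σ, d ∈ C^I implies e ∈ C^J. Then S is a Σ-simulation from I to J. Consequently, for finite J, (I,d) ≤_Σ (J,e) holds if and only if every Σ-EL concept true at d in I is true at e in J. -/

import Mathlib

/-- A DL interpretation with domain `D`, concept names `CN`, role names `RN`. -/
structure Interp (D CN RN : Type) where
  conc : CN → Set D
  rol : RN → D → D → Prop
/-- EL concepts: `⊤`, concept names, conjunction, existential restriction. -/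
inductive ELConcept (CN RN : Type) where
  | top
  | atom (A : CN)
  | conj (c d : ELConcept CN RN)
  | ex (r : RN) (c : ELConcept CN RN)

/-- Semantics of EL concepts in an interpretation. -/
def elSem {D CN RN : Type} (I : Interp D CN RN) : ELConcept CN RN → Set D
  | .top => Set.univ
  | .atom A => I.conc A
  | .conj c d => elSem I c ∩ elSem I d
  | .ex r c => {x | ∃ y, I.rol r x y ∧ y ∈ elSem I c}
/-- The EL concept `c` uses only symbols from the signature `(SC, SR)`. -/
def ELConcept.InSig {CN RN : Type} (SC : Set CN) (SR : Set RN) :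
    ELConcept CN RN → Prop
  | .top => True
  | .atom A => A ∈ SC
  | .conj c d => c.InSig SC SR ∧ d.InSig SC SR
  | .ex r c => r ∈ SR ∧ c.InSig SC SR
/-- `S` is a `Σ`-simulation from `I` to `J` (for signature `(SC, SR)`). -/
def IsSimulation {D E CN RN : Type} (SC : Set CN) (SR : Set RN)
    (I : Interp D CN RN) (J : Interp E CN RN) (S : D → E → Prop) : Prop :=
  (∀ A ∈ SC, ∀ d d', S d d' → d ∈ I.conc A → d' ∈ J.conc A) ∧
  (∀ r ∈ SR, ∀ d e d', S d d' → I.rol r d e → ∃ e', J.rol r d' e' ∧ S e e')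

/-- `(I, d) ≤_Σ (J, e)`: some `Σ`-simulation contains `(d, e)`. -/
def SimLE {D E CN RN : Type} (SC : Set CN) (SR : Set RN)
    (I : Interp D CN RN) (J : Interp E CN RN) (d : D) (e : E) : Prop :=
  ∃ S, IsSimulation SC SR I J S ∧ S d e


/-- Fold a list of concepts into a conjunction. -/
def listConj {CN RN : Type} : List (ELConcept CN RN) → ELConcept CN RN
  | [] => .top
  | c :: cs => .conj c (listConj cs)

lemma listConj_insig {CN RN : Type} (SC : Set CN) (SR : Set RN)
    (L : List (ELConcept CN RN)) (h : ∀ c ∈ L, c.InSig SC SR) :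
    (listConj L).InSig SC SR := by
  induction L with
  | nil => trivial
  | cons c cs ih =>
    exact ⟨h c List.mem_cons_self, ih fun x hx => h x (List.mem_cons_of_mem _ hx)⟩

lemma listConj_sem {D CN RN : Type} (I : Interp D CN RN)
    (L : List (ELConcept CN RN)) (x : D) :
    x ∈ elSem I (listConj L) ↔ ∀ c ∈ L, x ∈ elSem I c := by
  induction L with
  | nil => simp [listConj, elSem]
  | cons c cs ih =>
    simp only [listConj, elSem, Set.mem_inter_iff, ih, List.mem_cons]
    constructor
    · rintro ⟨h1, h2⟩ a (rfl | ha)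
      · exact h1
      · exact h2 a ha
    · intro h
      exact ⟨h c (Or.inl rfl), fun a ha => h a (Or.inr ha)⟩

lemma sim_preserves {D E CN RN : Type} (SC : Set CN) (SR : Set RN)
    (I : Interp D CN RN) (J : Interp E CN RN) (S : D → E → Prop)
    (hS : IsSimulation SC SR I J S) :
    ∀ c : ELConcept CN RN, c.InSig SC SR →
      ∀ d e, S d e → d ∈ elSem I c → e ∈ elSem J c := by
  intro c
  induction c with
  | top => intro _ d e _ _; trivial
  | atom A => intro hA d e hde hd; exact hS.1 A hA d e hde hd
  | conj c1 c2 ih1 ih2 =>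
    rintro ⟨h1, h2⟩ d e hde ⟨hd1, hd2⟩
    exact ⟨ih1 h1 d e hde hd1, ih2 h2 d e hde hd2⟩
  | ex r c ih =>
    rintro ⟨hr, hc⟩ d e hde ⟨y, hxy, hy⟩
    obtain ⟨e', he', hsee⟩ := hS.2 r hr d y e hde hxy
    exact ⟨e', he', ih hc y e' hsee hy⟩

/-- Hennessy–Milner property: if `J` is finitely branching, then the relation
"every Σ-EL concept true at `d` in `I` is true at `e` in `J`" is itself a
Σ-simulation from `I` to `J`; consequently `(I, d) ≤_Σ (J, e)` holds iff
every Σ-EL concept true at `d` is true at `e`. -/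
theorem hennessy_milner {D E CN RN : Type}
    (SC : Set CN) (SR : Set RN) (I : Interp D CN RN) (J : Interp E CN RN)
    (hfb : ∀ (e : E) (r : RN), {e' | J.rol r e e'}.Finite) :
    IsSimulation SC SR I J
      (fun d e => ∀ c : ELConcept CN RN,
        c.InSig SC SR → d ∈ elSem I c → e ∈ elSem J c) ∧
    (∀ (d : D) (e : E),
      SimLE SC SR I J d e ↔
        ∀ c : ELConcept CN RN,
          c.InSig SC SR → d ∈ elSem I c → e ∈ elSem J c) := by
  classical
  have hsim : IsSimulation SC SR I J
      (fun d e => ∀ c : ELConcept CN RN,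
        c.InSig SC SR → d ∈ elSem I c → e ∈ elSem J c) := by
    constructor
    · intro A hA d d' hdd' hd
      exact hdd' (.atom A) hA hd
    · intro r hr d e d' hdd' hde
      by_contra hcon
      push_neg at hcon
      -- for each successor e' of d', pick a concept separating e from e'
      have hsep : ∀ e' ∈ (hfb d' r).toFinset, ∃ c : ELConcept CN RN,
          c.InSig SC SR ∧ e ∈ elSem I c ∧ e' ∉ elSem J c := by
        intro e' he'
        rw [Set.Finite.mem_toFinset] at he'
        have := hcon e' he'
        obtain ⟨c, hc1, hc2, hc3⟩ := this
        exact ⟨c, hc1, hc2, hc3⟩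
      choose f hf1 hf2 hf3 using hsep
      set L := (hfb d' r).toFinset.attach.toList.map
        (fun x => f x.1 x.2) with hL
      have hbig : d ∈ elSem I (.ex r (listConj L)) := by
        refine ⟨e, hde, ?_⟩
        rw [listConj_sem]
        intro c hc
        simp only [hL, List.mem_map, Finset.mem_toList, Finset.mem_attach,
          true_and] at hc
        obtain ⟨⟨x, hx⟩, _, rfl⟩ := hc
        exact hf2 x hx
      have hinsig : (ELConcept.ex r (listConj L)).InSig SC SR := by
        refine ⟨hr, listConj_insig SC SR L ?_⟩
        intro c hc
        simp only [hL, List.mem_map, Finset.mem_toList, Finset.mem_attach,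
          true_and] at hc
        obtain ⟨⟨x, hx⟩, _, rfl⟩ := hc
        exact hf1 x hx
      obtain ⟨e'', he''rol, he''sem⟩ := hdd' _ hinsig hbig
      have he''F : e'' ∈ (hfb d' r).toFinset := by
        rw [Set.Finite.mem_toFinset]; exact he''rol
      have : e'' ∈ elSem J (f e'' he''F) := by
        rw [listConj_sem] at he''sem
        apply he''sem
        simp only [hL, List.mem_map, Finset.mem_toList, Finset.mem_attach,
          true_and]
        exact ⟨⟨e'', he''F⟩, rfl⟩
      exact hf3 e'' he''F this
  refine ⟨hsim, fun d e => ⟨?_, fun h => ⟨_, hsim, h⟩⟩⟩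
  rintro ⟨S, hS, hSde⟩ c hc hd
  exact sim_preserves SC SR I J S hS c hc d e hSde hd
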